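/- If in the matching M_x we have pairs (σ_1,τ_1), (σ_2,τ_2), ..., (σ_n,τ_n) with τ_i = σ_i ∪ {x}, x ∉ σ_i, and σ_{i+1} ⊂ τ_i with |τ_i \ σ_{i+1}| = 1 for all i (indices mod n), then τ_1 = τ_n; consequently no nontrivial alternating cycle exists in M_x. -/
import Mathlib


/-- If in the matching `M_x` we have pairs `(σ_1,τ_1), …, (σ_n,τ_n)`
with `τ_i = σ_i ∪ {x}`, `x ∉ σ_i`, and `σ_{i+1}` covered by `τ_i`
(i.e. `σ_{i+1} ⊂ τ_i` with `|τ_i \ σ_{i+1}| = 1`) for all `i` (indices mod `n`),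
then `τ_1 = τ_n`; consequently no nontrivial alternating cycle exists in `M_x`.
(Here faces are indexed `0, …, n-1`, so the conclusion reads `τ 0 = τ (n-1)`.) -/
theorem tau_first_eq_tau_last {X : Type*} [DecidableEq X] (x : X)
    (n : ℕ) (hn : 2 ≤ n) (σ τ : ℕ → Finset X)
    (hτ : ∀ i < n, τ i = insert x (σ i) ∧ x ∉ σ i)
    (hcov : ∀ i < n, σ ((i + 1) % n) ⊂ τ i ∧ ((τ i) \ (σ ((i + 1) % n))).card = 1) :
    τ 0 = τ (n - 1) := by
  -- key step: for i with i+1 < n, τ (i+1) = τ i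
  have key : ∀ i, i + 1 < n → τ (i + 1) = τ i := by
    intro i hi1
    have hi : i < n := Nat.lt_of_succ_lt hi1
    obtain ⟨hτi, hxσi⟩ := hτ i hi
    obtain ⟨hτi1, hxσi1⟩ := hτ (i + 1) hi1
    obtain ⟨hsub, hcard⟩ := hcov i hi
    rw [Nat.mod_eq_of_lt hi1] at hsub hcard
    -- the difference τ i \ σ (i+1) is {x}
    have hxmem : x ∈ τ i \ σ (i + 1) := by
      refine Finset.mem_sdiff.mpr ⟨?_, hxσi1⟩
      rw [hτi]; exact Finset.mem_insert_self x _
    obtain ⟨a, ha⟩ := Finset.card_eq_one.mp hcard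
    rw [ha] at hxmem
    have hax : a = x := (Finset.mem_singleton.mp hxmem).symm
    subst hax
    -- hence σ (i+1) = τ i \ {a} = σ i
    have hσeq : σ (i + 1) = σ i := by
      have h1 : σ (i + 1) = τ i \ (τ i \ σ (i + 1)) :=
        (Finset.sdiff_sdiff_eq_self hsub.subset).symm
      rw [ha, hτi] at h1
      rw [h1]
      ext y
      simp only [Finset.mem_sdiff, Finset.mem_insert, Finset.mem_singleton]
      constructor
      · rintro ⟨hy | hy, hy2⟩
        · exact absurd hy hy2
        · exact hy
      · intro hy
        refine ⟨Or.inr hy, ?_⟩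
        rintro rfl; exact hxσi hy
    rw [hτi1, hτi, hσeq]
  -- now induct: τ k = τ 0 for all k ≤ n - 1
  have main : ∀ k, k < n → τ k = τ 0 := by
    intro k
    induction k with
    | zero => intro _; rfl
    | succ m ih => intro hm; rw [key m hm, ih (Nat.lt_of_succ_lt hm)]
  exact (main (n - 1) (Nat.sub_lt (by omega) one_pos)).symm
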